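/- arXiv:2007.09951 — 3 statements merged into one kernel-verified Lean document; each statement's English description precedes it below -/
import Mathlib

section
/- Let $n \geq 1$, $(\bar c_{ij})$ symmetric nonnegative reals, $c^* > 0$, and $v \in (\mathbb{R}_{>0})^n$. Define $B(v) = c^* M^{-1}(v) + M^{-1}(v) \bar A(v)$ where $M(v) = \mathrm{diag}(v)$ and $\bar A$ as above. Then $B(v)$ is symmetric positive definite, and in particular invertible. -/
theorem B_posDef (n : ℕ) (hn : 1 ≤ n) (c : Fin n → Fin n → ℝ)
    (hc0 : ∀ i j, i ≠ j → 0 ≤ c i j) (hcs : ∀ i j, c i j = c j i)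
    (cstar : ℝ) (hcstar : 0 < cstar)
    (v : Fin n → ℝ) (hv : ∀ i, 0 < v i) :
    let M : Matrix (Fin n) (Fin n) ℝ := Matrix.diagonal v
    let Abar : Matrix (Fin n) (Fin n) ℝ := Matrix.of fun i j =>
      if i = j then ∑ k, (if k = i then 0 else c i k * v k) else -(c i j * v i)
    let B : Matrix (Fin n) (Fin n) ℝ := cstar • M⁻¹ + M⁻¹ * Abar
    B.PosDef ∧ IsUnit B := by
  intro M Abar B
  have hvne : ∀ i, v i ≠ 0 := fun i => (hv i).ne'
  have hMinv : M⁻¹ = Matrix.diagonal (fun i => (v i)⁻¹) := by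
    apply Matrix.inv_eq_right_inv
    show Matrix.diagonal v * _ = 1
    rw [Matrix.diagonal_mul_diagonal]
    have : (fun i => v i * (v i)⁻¹) = fun _ => (1:ℝ) :=
      funext fun i => mul_inv_cancel₀ (hvne i)
    rw [this, Matrix.diagonal_one]
  have hBentry : ∀ i j, B i j =
      cstar * (if i = j then (v i)⁻¹ else 0) + (v i)⁻¹ * Abar i j := by
    intro i j
    show (cstar • M⁻¹ + M⁻¹ * Abar) i j = _
    rw [Matrix.add_apply, Matrix.smul_apply, hMinv, Matrix.diagonal_mul,
      Matrix.diagonal_apply, smul_eq_mul]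
  have hBoff : ∀ i j, i ≠ j → B i j = -(c i j) := by
    intro i j hij
    rw [hBentry, if_neg hij]
    show cstar * 0 + (v i)⁻¹ * (if i = j then _ else -(c i j * v i)) = _
    rw [if_neg hij, mul_zero, zero_add, inv_mul_eq_div, neg_div,
      mul_div_cancel_right₀ _ (hvne i)]
  have hBdiag : ∀ i, B i i = cstar * (v i)⁻¹ +
      (v i)⁻¹ * ∑ k, (if k = i then 0 else c i k * v k) := by
    intro i
    rw [hBentry, if_pos rfl]
    show cstar * (v i)⁻¹ + (v i)⁻¹ * (if i = i then _ else _) = _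
    rw [if_pos rfl]
  have hherm : B.IsHermitian := by
    show B.conjTranspose = B
    ext i j
    rw [Matrix.conjTranspose_apply]
    rcases eq_or_ne i j with rfl | hij
    · simp
    · rw [hBoff j i (Ne.symm hij), hBoff i j hij, hcs]
      simp
  have hpos : ∀ x : Fin n → ℝ, x ≠ 0 → 0 < dotProduct (star x) (B.mulVec x) := by
    intro x hx
    set g : Fin n → Fin n → ℝ := fun i j =>
      if i = j then 0 else c i j * (v j * x i ^ 2 / v i - x i * x j) with hg
    have key : dotProduct (star x) (B.mulVec x) =
        cstar * (∑ i, x i ^ 2 / v i) + ∑ i, ∑ j, g i j := by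
      have h0 : dotProduct (star x) (B.mulVec x) = ∑ i, ∑ j, x i * B i j * x j := by
        simp [dotProduct, Matrix.mulVec, Finset.mul_sum, mul_assoc]
      rw [h0, Finset.mul_sum, ← Finset.sum_add_distrib]
      refine Finset.sum_congr rfl fun i _ => ?_
      have h1 : ∑ j, x i * B i j * x j = x i * B i i * x i +
          ∑ j ∈ Finset.univ.erase i, x i * (-(c i j)) * x j := by
        rw [← Finset.add_sum_erase _ _ (Finset.mem_univ i)]
        congr 1
        exact Finset.sum_congr rfl fun j hj => by
          rw [hBoff i j (Ne.symm (Finset.mem_erase.1 hj).1)]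
      have h2 : ∑ j, g i j =
          ∑ j ∈ Finset.univ.erase i, c i j * (v j * x i ^ 2 / v i - x i * x j) := by
        rw [← Finset.sum_erase Finset.univ (f := g i) (if_pos rfl)]
        exact Finset.sum_congr rfl fun j hj =>
          if_neg (fun h => (Finset.mem_erase.1 hj).1 h.symm)
      have h3 : ∑ k, (if k = i then (0:ℝ) else c i k * v k) =
          ∑ k ∈ Finset.univ.erase i, c i k * v k := by
        rw [← Finset.sum_erase Finset.univ
          (f := fun k => if k = i then (0:ℝ) else c i k * v k) (if_pos rfl)]
        exact Finset.sum_congr rfl fun k hk => if_neg (Finset.mem_erase.1 hk).1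
      rw [h1, h2, hBdiag i, h3]
      have h4 : ∑ j ∈ Finset.univ.erase i, c i j * (v j * x i ^ 2 / v i - x i * x j) =
          (x i * (v i)⁻¹ * x i) * (∑ j ∈ Finset.univ.erase i, c i j * v j) +
          ∑ j ∈ Finset.univ.erase i, x i * (-(c i j)) * x j := by
        rw [Finset.mul_sum, ← Finset.sum_add_distrib]
        exact Finset.sum_congr rfl fun j _ => by rw [div_eq_mul_inv]; ring
      rw [h4, div_eq_mul_inv]
      ring
    rw [key]
    have hgnn : 0 ≤ ∑ i, ∑ j, g i j := by
      have hpair : ∀ i j, 0 ≤ g i j + g j i := by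
        intro i j
        rcases eq_or_ne i j with rfl | h
        · simp [hg]
        · have he : g i j + g j i =
              c i j * ((v j * x i - v i * x j) ^ 2 / (v i * v j)) := by
            rw [hg]
            simp only [if_neg h, if_neg h.symm]
            rw [hcs j i]
            field_simp [hvne i, hvne j]
            ring
          rw [he]
          exact mul_nonneg (hc0 i j h)
            (div_nonneg (sq_nonneg _) (mul_pos (hv i) (hv j)).le)
      have h2s : (0:ℝ) ≤ ∑ i, ∑ j, (g i j + g j i) :=
        Finset.sum_nonneg fun i _ => Finset.sum_nonneg fun j _ => hpair i j
      have hsplit : ∑ i, ∑ j, (g i j + g j i) = 2 * ∑ i, ∑ j, g i j := by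
        have hswap : ∑ i, ∑ j, g j i = ∑ i, ∑ j, g i j := Finset.sum_comm
        simp only [Finset.sum_add_distrib]
        rw [hswap]; ring
      rw [hsplit] at h2s
      linarith
    have hsum : 0 < ∑ i, x i ^ 2 / v i := by
      obtain ⟨i, hi⟩ := Function.ne_iff.1 hx
      refine Finset.sum_pos' (fun j _ => div_nonneg (sq_nonneg _) (hv j).le)
        ⟨i, Finset.mem_univ i, div_pos ?_ (hv i)⟩
      exact lt_of_le_of_ne (sq_nonneg _) (Ne.symm (pow_ne_zero 2 hi))
    have := mul_pos hcstar hsum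
    linarith
  have hPD : B.PosDef := Matrix.posDef_iff_dotProduct_mulVec.2 ⟨hherm, hpos⟩
  exact ⟨hPD, (Matrix.isUnit_iff_isUnit_det B).2 (isUnit_iff_ne_zero.2 hPD.det_pos.ne')⟩
end

section
/- Let $n \geq 1$, $(c_{ij})_{i\neq j}$ positive symmetric reals, and $v \in (\mathbb{R}_{>0})^n$. Define $A(v)$ by $A_{ii}(v) = \sum_{j\neq i} c_{ij} v_j$ and $A_{ij}(v) = -c_{ij} v_i$ for $i\neq j$. Then $\mathrm{Ker}(A(v)) = \mathrm{Span}\{v\}$ and $\mathrm{Ran}(A(v)) = \mathcal{V}_0 := \{z \in \mathbb{R}^n : \sum_i z_i = 0\}$. -/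
open Finset

theorem A_ker_range (n : ℕ) (hn : 1 ≤ n) (c : Fin n → Fin n → ℝ)
    (hc0 : ∀ i j, i ≠ j → 0 < c i j) (hcs : ∀ i j, c i j = c j i)
    (v : Fin n → ℝ) (hv : ∀ i, 0 < v i) :
    let A : Matrix (Fin n) (Fin n) ℝ := Matrix.of fun i j =>
      if i = j then ∑ k, (if k = i then 0 else c i k * v k) else -(c i j * v i)
    LinearMap.ker A.mulVecLin = Submodule.span ℝ {v} ∧
    LinearMap.range A.mulVecLin =
      LinearMap.ker (∑ i, LinearMap.proj i : (Fin n → ℝ) →ₗ[ℝ] ℝ) := by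
  intro A
  haveI : Nonempty (Fin n) := ⟨⟨0, hn⟩⟩
  -- entry formula
  have entry : ∀ (x : Fin n → ℝ) (i : Fin n),
      A.mulVec x i = ∑ j ∈ univ.erase i, c i j * (v j * x i - v i * x j) := by
    intro x i
    have h1 : A.mulVec x i = ∑ j, (if i = j then (∑ k, (if k = i then 0 else c i k * v k)) else -(c i j * v i)) * x j := by
      simp [Matrix.mulVec, dotProduct, A]
    rw [h1, ← Finset.add_sum_erase _ _ (mem_univ i)]
    rw [if_pos rfl, Finset.sum_mul]
    have h2 : ∑ k, (if k = i then 0 else c i k * v k) * x i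
        = ∑ k ∈ univ.erase i, c i k * v k * x i := by
      rw [← Finset.sum_erase (s := univ) (a := i)
        (f := fun k => (if k = i then 0 else c i k * v k) * x i) (by simp)]
      exact Finset.sum_congr rfl fun k hk => by
        rw [if_neg (Finset.mem_erase.mp hk).1]
    have h3 : ∑ j ∈ univ.erase i, (if i = j then (∑ k, (if k = i then 0 else c i k * v k)) else -(c i j * v i)) * x j
        = ∑ j ∈ univ.erase i, -(c i j * v i) * x j := by
      exact Finset.sum_congr rfl fun j hj => by
        rw [if_neg (Ne.symm (Finset.mem_erase.mp hj).1)]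
    rw [h2, h3, ← Finset.sum_add_distrib]
    exact Finset.sum_congr rfl fun j _ => by ring
  -- v in kernel
  have hvker : A.mulVec v = 0 := by
    funext i
    rw [entry]
    exact Finset.sum_eq_zero fun j _ => by ring
  have hker : LinearMap.ker A.mulVecLin = Submodule.span ℝ {v} := by
    apply le_antisymm
    · intro x hx
      have hx0 : A.mulVec x = 0 := hx
      obtain ⟨i, -, hmax⟩ := Finset.exists_max_image univ (fun j => x j / v j)
        Finset.univ_nonempty
      have hzero : ∀ j ∈ univ.erase i, c i j * (v j * x i - v i * x j) = 0 := by
        have hnn : ∀ j ∈ univ.erase i, 0 ≤ c i j * (v j * x i - v i * x j) := by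
          intro j hj
          have hji : j ≠ i := (Finset.mem_erase.mp hj).1
          have hle : x j / v j ≤ x i / v i := hmax j (mem_univ j)
          have := (div_le_div_iff₀ (hv j) (hv i)).mp hle
          have hc := (hc0 i j (Ne.symm hji)).le
          nlinarith
        have hsum : ∑ j ∈ univ.erase i, c i j * (v j * x i - v i * x j) = 0 := by
          rw [← entry x i]; rw [hx0]; rfl
        intro j hj
        exact (Finset.sum_eq_zero_iff_of_nonneg hnn).mp hsum j hj
      refine Submodule.mem_span_singleton.mpr ⟨x i / v i, ?_⟩
      funext j
      by_cases hji : j = i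
      · subst hji; simp only [Pi.smul_apply, smul_eq_mul]
        rw [div_mul_eq_mul_div, mul_div_assoc, div_self (hv j).ne', mul_one]
      · have h0 := hzero j (Finset.mem_erase.mpr ⟨hji, mem_univ j⟩)
        have hc := (hc0 i j (Ne.symm hji)).ne'
        have h1 : v j * x i - v i * x j = 0 := by
          rcases mul_eq_zero.mp h0 with h | h
          · exact absurd h hc
          · exact h
        simp only [Pi.smul_apply, smul_eq_mul]
        rw [div_mul_eq_mul_div, div_eq_iff (hv i).ne']
        linarith
    · rw [Submodule.span_singleton_le_iff_mem]
      exact hvker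
  refine ⟨hker, ?_⟩
  set T : (Fin n → ℝ) →ₗ[ℝ] ℝ := (∑ i, LinearMap.proj i) with hT
  have hTapp : ∀ x : Fin n → ℝ, T x = ∑ i, x i := by
    intro x; simp [hT, LinearMap.sum_apply]
  have hle : LinearMap.range A.mulVecLin ≤ LinearMap.ker T := by
    rintro y ⟨x, rfl⟩
    rw [LinearMap.mem_ker, hTapp]
    have : ∀ i, A.mulVecLin x i = ∑ j, (if j = i then 0 else c i j * (v j * x i - v i * x j)) := by
      intro i
      rw [Matrix.mulVecLin_apply, entry x i,
        ← Finset.sum_erase (s := univ) (a := i)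
          (f := fun j => if j = i then 0 else c i j * (v j * x i - v i * x j)) (by simp)]
      exact Finset.sum_congr rfl fun j hj => by
        rw [if_neg (Finset.mem_erase.mp hj).1]
    simp only [this]
    set g : Fin n → Fin n → ℝ := fun i j => if j = i then 0 else c i j * (v j * x i - v i * x j) with hg
    have hanti : ∀ i j, g i j + g j i = 0 := by
      intro i j
      by_cases h : i = j
      · subst h; simp [hg]
      · simp only [hg, if_neg h, if_neg (Ne.symm h)]
        rw [hcs i j]; ring
    have hswap : ∑ i, ∑ j, g i j = ∑ i, ∑ j, g j i := Finset.sum_comm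
    have h2 : (∑ i, ∑ j, g i j) + (∑ i, ∑ j, g i j) = 0 := by
      nth_rewrite 2 [hswap]
      rw [← Finset.sum_add_distrib]
      refine Finset.sum_eq_zero fun i _ => ?_
      rw [← Finset.sum_add_distrib]
      exact Finset.sum_eq_zero fun j _ => hanti i j
    linarith
  -- dimensions
  have hvne : v ≠ 0 := fun h => (hv ⟨0, hn⟩).ne' (by rw [h]; rfl)
  have hkdim : Module.finrank ℝ (LinearMap.ker A.mulVecLin) = 1 := by
    rw [hker, finrank_span_singleton hvne]
  have hrank := LinearMap.finrank_range_add_finrank_ker A.mulVecLin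
  rw [hkdim] at hrank
  have hfd : Module.finrank ℝ (Fin n → ℝ) = n := by simp
  rw [hfd] at hrank
  have hTsurj : Function.Surjective T := by
    intro r
    exact ⟨Pi.single ⟨0, hn⟩ r, by rw [hTapp]; simp⟩
  have hTrank := LinearMap.finrank_range_add_finrank_ker T
  rw [LinearMap.range_eq_top.mpr hTsurj, hfd] at hTrank
  have hTrange : Module.finrank ℝ (⊤ : Submodule ℝ ℝ) = 1 := by simp
  rw [hTrange] at hTrank
  exact Submodule.eq_of_le_of_finrank_eq hle (by omega)
end

section
/- Let $n \geq 1$, $(\bar c_{ij})$ symmetric nonnegative, $c^* > 0$, $v \in (\mathbb{R}_{>0})^n$, and $g \in \mathbb{R}^n$. Then the linear system $g + (c^* I + \bar A(v)) J = 0$ has a unique solution $J$, given by $J = -B(v)^{-1} M(v)^{-1} g$ where $B(v) = c^* M^{-1}(v) + M^{-1}(v)\bar A(v)$ is symmetric positive definite. -/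
theorem unique_flux_solution (n : ℕ) (hn : 1 ≤ n) (c : Fin n → Fin n → ℝ)
    (hc0 : ∀ i j, i ≠ j → 0 ≤ c i j) (hcs : ∀ i j, c i j = c j i)
    (cstar : ℝ) (hcstar : 0 < cstar)
    (v : Fin n → ℝ) (hv : ∀ i, 0 < v i) (g : Fin n → ℝ) :
    let M : Matrix (Fin n) (Fin n) ℝ := Matrix.diagonal v
    let Abar : Matrix (Fin n) (Fin n) ℝ := Matrix.of fun i j =>
      if i = j then ∑ k, (if k = i then 0 else c i k * v k) else -(c i j * v i)
    let B : Matrix (Fin n) (Fin n) ℝ := cstar • M⁻¹ + M⁻¹ * Abar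
    B.PosDef ∧
    ∀ J : Fin n → ℝ,
      g + (cstar • (1 : Matrix (Fin n) (Fin n) ℝ) + Abar).mulVec J = 0 ↔
        J = -(B⁻¹.mulVec (M⁻¹.mulVec g)) := by
  intro M Abar B
  have hvne : ∀ i, v i ≠ 0 := fun i => (hv i).ne'
  have hMinv : M⁻¹ = Matrix.diagonal fun i => (v i)⁻¹ := by
    refine Matrix.inv_eq_right_inv ?_
    rw [Matrix.diagonal_mul_diagonal]
    convert Matrix.diagonal_one with i
    exact mul_inv_cancel₀ (hvne i)
  set S : Matrix (Fin n) (Fin n) ℝ := cstar • (1 : Matrix (Fin n) (Fin n) ℝ) + Abar with hSdef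
  have hB : B = M⁻¹ * S := by
    show cstar • M⁻¹ + M⁻¹ * Abar = M⁻¹ * S
    rw [hSdef, Matrix.mul_add, Matrix.mul_smul, Matrix.mul_one]
  have hBentry : ∀ i j, B i j = (v i)⁻¹ * S i j := by
    intro i j
    rw [hB, hMinv, Matrix.diagonal_mul]
  have hSoff : ∀ i j, i ≠ j → S i j = -(c i j * v i) := by
    intro i j hij
    simp [hSdef, Matrix.add_apply, Matrix.one_apply, hij, Abar]
  have hSdiag : ∀ i, S i i = cstar + ∑ k, (if k = i then 0 else c i k * v k) := by
    intro i; simp [hSdef, Abar]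
  have hBherm : B.IsHermitian := by
    rw [Matrix.IsHermitian]
    ext i j
    rw [Matrix.conjTranspose_apply, star_trivial, hBentry, hBentry]
    by_cases hij : i = j
    · subst hij; rfl
    · rw [hSoff _ _ (Ne.symm hij), hSoff _ _ hij, hcs j i]
      rw [mul_comm (c i j) (v j), mul_comm (c i j) (v i), mul_neg, mul_neg,
        inv_mul_cancel_left₀ (hvne j), inv_mul_cancel_left₀ (hvne i)]
  -- quadratic form decomposition
  have hrow : ∀ (x : Fin n → ℝ) (i : Fin n), x i * (B.mulVec x) i
      = cstar * (v i)⁻¹ * x i ^ 2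
        + ∑ j, (if i = j then 0 else c i j * ((v i)⁻¹ * v j * x i ^ 2 - x i * x j)) := by
    intro x i
    have h1 : (B.mulVec x) i = ∑ j, B i j * x j := rfl
    have hsum_ite : ∑ k, (if k = i then (0:ℝ) else c i k * v k)
        = ∑ k ∈ Finset.univ.erase i, c i k * v k := by
      rw [← Finset.sum_erase Finset.univ
        (f := fun k => if k = i then (0:ℝ) else c i k * v k) (a := i) (by simp)]
      exact Finset.sum_congr rfl fun k hk => if_neg (Finset.ne_of_mem_erase hk)
    rw [h1, Finset.mul_sum,
      ← Finset.add_sum_erase Finset.univ (fun j => x i * (B i j * x j)) (Finset.mem_univ i),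
      ← Finset.sum_erase Finset.univ
        (f := fun j => if i = j then (0:ℝ) else c i j * ((v i)⁻¹ * v j * x i ^ 2 - x i * x j))
        (a := i) (by simp)]
    have hdiagterm : x i * (B i i * x i)
        = cstar * (v i)⁻¹ * x i ^ 2
          + ∑ k ∈ Finset.univ.erase i, (v i)⁻¹ * (c i k * v k) * x i ^ 2 := by
      rw [hBentry, hSdiag, hsum_ite]
      have hsum2 : ∑ k ∈ Finset.univ.erase i, (v i)⁻¹ * (c i k * v k) * x i ^ 2
          = (v i)⁻¹ * (∑ k ∈ Finset.univ.erase i, c i k * v k) * x i ^ 2 := by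
        rw [Finset.mul_sum, Finset.sum_mul]
      rw [hsum2]
      ring
    rw [hdiagterm, add_assoc, ← Finset.sum_add_distrib]
    congr 1
    refine Finset.sum_congr rfl fun j hj => ?_
    have hji : j ≠ i := Finset.ne_of_mem_erase hj
    rw [hBentry, hSoff i j (Ne.symm hji), if_neg (Ne.symm hji)]
    have hvv : (v i)⁻¹ * v i = 1 := inv_mul_cancel₀ (hvne i)
    linear_combination (-(c i j * x i * x j)) * hvv
  have hQ : ∀ x : Fin n → ℝ, dotProduct x (B.mulVec x)
      = (∑ i, cstar * (v i)⁻¹ * x i ^ 2)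
        + ∑ i, ∑ j, (if i = j then 0 else c i j * ((v i)⁻¹ * v j * x i ^ 2 - x i * x j)) := by
    intro x
    rw [dotProduct, ← Finset.sum_add_distrib]
    exact Finset.sum_congr rfl fun i _ => hrow x i
  have hT : ∀ x : Fin n → ℝ,
      0 ≤ ∑ i, ∑ j, (if i = j then 0 else c i j * ((v i)⁻¹ * v j * x i ^ 2 - x i * x j)) := by
    intro x
    set f : Fin n → Fin n → ℝ :=
      fun i j => if i = j then 0 else c i j * ((v i)⁻¹ * v j * x i ^ 2 - x i * x j) with hf
    have hcomm : ∑ i, ∑ j, f i j = ∑ i, ∑ j, f j i := Finset.sum_comm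
    have h2 : (2:ℝ) * ∑ i, ∑ j, f i j = ∑ i, ∑ j, (f i j + f j i) := by
      rw [two_mul]
      nth_rewrite 2 [hcomm]
      rw [← Finset.sum_add_distrib]
      exact Finset.sum_congr rfl fun i _ => (Finset.sum_add_distrib).symm
    have hterm : ∀ i j, 0 ≤ f i j + f j i := by
      intro i j
      by_cases hij : i = j
      · simp [hf, hij]
      · rw [hf]
        simp only [if_neg hij, if_neg (Ne.symm hij)]
        have key : c i j * ((v i)⁻¹ * v j * x i ^ 2 - x i * x j)
            + c j i * ((v j)⁻¹ * v i * x j ^ 2 - x j * x i)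
            = c i j * ((v j * x i - v i * x j) ^ 2 * ((v i)⁻¹ * (v j)⁻¹)) := by
          rw [← hcs i j]
          field_simp [hvne i, hvne j]
          ring
        rw [key]
        exact mul_nonneg (hc0 i j hij) (mul_nonneg (sq_nonneg _)
          (mul_nonneg (inv_nonneg.mpr (hv i).le) (inv_nonneg.mpr (hv j).le)))
    have h3 : 0 ≤ (2:ℝ) * ∑ i, ∑ j, f i j := by
      rw [h2]
      exact Finset.sum_nonneg fun i _ => Finset.sum_nonneg fun j _ => hterm i j
    linarith
  have hPos : B.PosDef := by
    refine Matrix.posDef_iff_dotProduct_mulVec.mpr ⟨hBherm, fun x hx => ?_⟩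
    rw [star_trivial, hQ x]
    have hP : 0 < ∑ i, cstar * (v i)⁻¹ * x i ^ 2 := by
      obtain ⟨i, hi⟩ := Function.ne_iff.mp hx
      refine Finset.sum_pos' (fun j _ => mul_nonneg
        (mul_nonneg hcstar.le (inv_nonneg.mpr (hv j).le)) (sq_nonneg _))
        ⟨i, Finset.mem_univ i, ?_⟩
      have hx2 : 0 < x i ^ 2 := (sq_nonneg (x i)).lt_of_ne (Ne.symm (pow_ne_zero 2 hi))
      exact mul_pos (mul_pos hcstar (inv_pos.mpr (hv i))) hx2
    linarith [hT x]
  refine ⟨hPos, fun J => ?_⟩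
  have hMdet : IsUnit M.det := by
    have : M.det = ∏ i, v i := Matrix.det_diagonal
    rw [this]
    exact (Finset.prod_pos fun i _ => hv i).ne'.isUnit
  have hBdet : IsUnit B.det := hPos.det_pos.ne'.isUnit
  have hMB : M * B = S := by
    rw [hB, ← Matrix.mul_assoc, Matrix.mul_nonsing_inv M hMdet, Matrix.one_mul]
  have hSinv : S⁻¹ = B⁻¹ * M⁻¹ := by rw [← hMB, Matrix.mul_inv_rev]
  have hSdet : IsUnit S.det := by
    rw [← hMB, Matrix.det_mul]
    exact hMdet.mul hBdet
  constructor
  · intro h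
    have hSJ : S.mulVec J = -g := by
      rw [eq_neg_iff_add_eq_zero, add_comm]
      exact h
    have h4 : S⁻¹.mulVec (S.mulVec J) = S⁻¹.mulVec (-g) := by rw [hSJ]
    rw [Matrix.mulVec_mulVec, Matrix.nonsing_inv_mul S hSdet, Matrix.one_mulVec] at h4
    rw [h4, hSinv, Matrix.mulVec_neg, ← Matrix.mulVec_mulVec]
  · intro h
    rw [h]
    have hSS : S * B⁻¹ * M⁻¹ = 1 := by
      rw [Matrix.mul_assoc, ← hSinv]
      exact Matrix.mul_nonsing_inv S hSdet
    rw [Matrix.mulVec_neg, Matrix.mulVec_mulVec, Matrix.mulVec_mulVec, hSS,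
      Matrix.one_mulVec, add_neg_cancel]
end
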